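/- For the unit cube Q_p = [0,1]^p ⊆ ℝ^p, s > p, and any positive integers m ≥ 2 and N, the polarization constants satisfy 𝒫_s(Q_p; m^p N) ≥ m^s · 𝒫_s(Q_p; N). -/

import Mathlib

open scoped ENNReal BigOperators

/-- The `N`-th Riesz `s`-polarization constant of `A`. -/
noncomputable def rPolConst {p : ℕ} (s : ℝ) (A : Set (EuclideanSpace ℝ (Fin p))) (N : ℕ) : ℝ≥0∞ :=
  ⨆ x : {x : Fin N → EuclideanSpace ℝ (Fin p) // ∀ j, x j ∈ A},
    ⨅ y ∈ A, ∑ j, (edist y (x.1 j) ^ s)⁻¹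

/-- The unit cube `[0,1]^p` in `ℝ^p`. -/
def unitCube (p : ℕ) : Set (EuclideanSpace ℝ (Fin p)) :=
  {x | ∀ i, x i ∈ Set.Icc (0 : ℝ) 1}

theorem stmt3 {p : ℕ} (hp : 0 < p) (s : ℝ) (hs : (p : ℝ) < s)
    (m N : ℕ) (hm : 2 ≤ m) (hN : 0 < N) :
    (m : ℝ≥0∞) ^ s * rPolConst s (unitCube p) N ≤ rPolConst s (unitCube p) (m ^ p * N) := by
  have hs0 : 0 ≤ s := le_of_lt (lt_of_le_of_lt (Nat.cast_nonneg p) hs)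
  have hm0 : (0:ℝ) < m := by positivity
  have hmne : (m:ℝ) ≠ 0 := ne_of_gt hm0
  set E := EuclideanSpace ℝ (Fin p)
  set Q := unitCube p with hQ
  -- encoding equiv
  let e : (Fin p → Fin m) × Fin N ≃ Fin (m ^ p * N) :=
    ((finFunctionFinEquiv).prodCongr (Equiv.refl (Fin N))).trans finProdFinEquiv
  -- the translation vector for a grid index k
  let c : (Fin p → Fin m) → E := fun k => WithLp.toLp 2 (fun t => (k t : ℝ) : Fin p → ℝ)
  conv_lhs => rw [rPolConst, ENNReal.mul_iSup]
  apply iSup_le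
  rintro ⟨x, hx⟩
  -- the big configuration
  let X : Fin (m ^ p * N) → E := fun j => (m : ℝ)⁻¹ • (x (e.symm j).2 + c (e.symm j).1)
  have hX : ∀ j, X j ∈ Q := by
    intro j t
    have h1 := (hx (e.symm j).2 t).1
    have h2 := (hx (e.symm j).2 t).2
    have hk : ((e.symm j).1 t : ℝ) ≤ (m : ℝ) - 1 := by
      have := ((e.symm j).1 t).isLt
      have : ((e.symm j).1 t : ℝ) + 1 ≤ (m : ℝ) := by exact_mod_cast this
      linarith
    have hk0 : (0:ℝ) ≤ ((e.symm j).1 t : ℝ) := Nat.cast_nonneg _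
    have hXj : X j t = (m:ℝ)⁻¹ * (x (e.symm j).2 t + ((e.symm j).1 t : ℝ)) := rfl
    constructor
    · rw [hXj]; positivity
    · rw [hXj]
      rw [inv_mul_le_iff₀ hm0]
      linarith
  rw [rPolConst]
  refine le_trans ?_ (le_iSup _ (⟨X, hX⟩ : {x : Fin (m ^ p * N) → E // ∀ j, x j ∈ Q}))
  simp only
  refine le_iInf₂ fun y hy => ?_
  -- choose grid index k for y
  have hy' : ∀ t, y t ∈ Set.Icc (0:ℝ) 1 := hy
  let k : Fin p → Fin m := fun t => ⟨min ⌊(m:ℝ) * y t⌋₊ (m - 1), by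
    have : m - 1 < m := by omega
    omega⟩
  -- y' = m•y - c k lies in the cube
  let y' : E := (m:ℝ) • y - c k
  have hky : ∀ t, (0:ℝ) ≤ (m:ℝ) * y t - (k t : ℝ) ∧ (m:ℝ) * y t - (k t : ℝ) ≤ 1 := by
    intro t
    have h0 : (0:ℝ) ≤ y t := (hy' t).1
    have h1 : y t ≤ 1 := (hy' t).2
    have hge : (0:ℝ) ≤ (m:ℝ) * y t := by positivity
    have hfl : (⌊(m:ℝ) * y t⌋₊ : ℝ) ≤ (m:ℝ) * y t := Nat.floor_le hge
    have hkval : (k t : ℝ) = (min ⌊(m:ℝ) * y t⌋₊ (m - 1) : ℕ) := rfl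
    constructor
    · rw [hkval]
      have : ((min ⌊(m:ℝ) * y t⌋₊ (m - 1) : ℕ) : ℝ) ≤ (⌊(m:ℝ) * y t⌋₊ : ℝ) := by
        exact_mod_cast Nat.cast_le.mpr (min_le_left _ _)
      linarith
    · rw [hkval]
      rcases le_or_gt ⌊(m:ℝ) * y t⌋₊ (m-1) with h | h
      · rw [min_eq_left h]
        have := Nat.lt_floor_add_one ((m:ℝ) * y t)
        linarith
      · rw [min_eq_right (le_of_lt h)]
        have hmy : (m:ℝ) * y t ≤ m := by nlinarith
        have : ((m - 1 : ℕ) : ℝ) = (m:ℝ) - 1 := by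
          have : (1:ℕ) ≤ m := by omega
          push_cast [Nat.cast_sub this]; ring
        rw [this]; linarith
  have hy'Q : y' ∈ Q := by
    intro t
    have := hky t
    have hyt : y' t = (m:ℝ) * y t - (k t : ℝ) := rfl
    rw [hyt]
    exact ⟨this.1, this.2⟩
  -- key edist computation
  have hedist : ∀ i : Fin N, edist y (X (e (k, i))) = (m : ℝ≥0∞)⁻¹ * edist y' (x i) := by
    intro i
    have hsymm : e.symm (e (k, i)) = (k, i) := e.symm_apply_apply _
    have hXe : X (e (k, i)) = (m : ℝ)⁻¹ • (x i + c k) := by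
      simp only [X, hsymm]
    have hyrep : y = (m : ℝ)⁻¹ • ((m:ℝ) • y) := (inv_smul_smul₀ hmne y).symm
    rw [hXe]
    conv_lhs => rw [hyrep]
    rw [edist_smul₀]
    have : edist ((m:ℝ) • y) (x i + c k) = edist y' (x i) := by
      have : (m:ℝ) • y = y' + c k := by simp [y']
      rw [this, edist_add_right]
    rw [this, ENNReal.smul_def, smul_eq_mul]
    congr 1
    rw [nnnorm_inv]
    simp only [Real.nnnorm_natCast]
    rw [ENNReal.coe_inv (by exact_mod_cast (by omega : m ≠ 0))]
    simp
  -- now the sum bound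
  have hsum : (m : ℝ≥0∞) ^ s * ∑ i : Fin N, (edist y' (x i) ^ s)⁻¹
      ≤ ∑ j : Fin (m ^ p * N), (edist y (X j) ^ s)⁻¹ := by
    rw [← Equiv.sum_comp e (fun j => (edist y (X j) ^ s)⁻¹), Fintype.sum_prod_type]
    calc (m : ℝ≥0∞) ^ s * ∑ i : Fin N, (edist y' (x i) ^ s)⁻¹
        = ∑ i : Fin N, (edist y (X (e (k, i))) ^ s)⁻¹ := by
          rw [Finset.mul_sum]
          refine Finset.sum_congr rfl fun i _ => ?_
          have hmtop : (m:ℝ≥0∞) ^ s ≠ ⊤ :=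
            ENNReal.rpow_ne_top_of_nonneg hs0 (ENNReal.natCast_ne_top m)
          have hmz : (m:ℝ≥0∞) ^ s ≠ 0 :=
            ne_of_gt (ENNReal.rpow_pos (by exact_mod_cast (by omega : 0 < m)) (ENNReal.natCast_ne_top m))
          rw [hedist i, ENNReal.mul_rpow_of_ne_top (by simp; omega) (edist_ne_top _ _),
            ENNReal.inv_rpow,
            ENNReal.mul_inv (Or.inl (ENNReal.inv_ne_zero.mpr hmtop))
              (Or.inl (ENNReal.inv_ne_top.mpr hmz)), inv_inv]
      _ ≤ ∑ k' : Fin p → Fin m, ∑ i : Fin N, (edist y (X (e (k', i))) ^ s)⁻¹ :=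
          Finset.single_le_sum
            (f := fun k' => ∑ i : Fin N, (edist y (X (e (k', i))) ^ s)⁻¹)
            (fun _ _ => zero_le) (Finset.mem_univ k)
  calc (m : ℝ≥0∞) ^ s * ⨅ z ∈ Q, ∑ i : Fin N, (edist z (x i) ^ s)⁻¹
      ≤ (m : ℝ≥0∞) ^ s * ∑ i : Fin N, (edist y' (x i) ^ s)⁻¹ := by
        gcongr
        exact iInf₂_le y' hy'Q
    _ ≤ ∑ j : Fin (m ^ p * N), (edist y (X j) ^ s)⁻¹ := hsum
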